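/- arXiv:0909.3951 — 2 statements merged into one kernel-verified Lean document; each statement's English description precedes it below -/
import Mathlib

section
/- Let P be a (second countable) Hilbert C_0(Y)-module. The family of sets U_{p,ε} = {h ∈ P_y : y ∈ U, ‖h − p̂(y)‖ < ε}, for U open in Y, p ∈ P, ε > 0, is a base for a second countable topology on E_P = ⊔_{y∈Y} P_y which makes E_P a Hilbert bundle over Y. -/
noncomputable section
open scoped ZeroAtInfty
open Topology Filter ComplexConjugate

namespace Stabilization

/-- The set of continuous sections vanishing at infinity of a family of normed fibers,
relative to a given topology on the total space of the bundle. -/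
def C0Sections {Y : Type} [TopologicalSpace Y] (H : Y → Type)
    [∀ y, NormedAddCommGroup (H y)] (tE : TopologicalSpace ((y : Y) × H y)) :
    Set ((y : Y) → H y) :=
  {F | @Continuous Y ((y : Y) × H y) _ tE (fun y => ⟨y, F y⟩) ∧
    Tendsto (fun y => ‖F y‖) (cocompact Y) (nhds 0)}

/-- A Hilbert bundle over `Y` (Definition 2.1 of the paper): a family of Hilbert spaces
`H y` together with a second countable topology on the total space such that
(i) fiberwise addition and scalar multiplication are continuous, (ii) the norm along any
continuous section vanishing at infinity is continuous, (iii) the continuous sections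
vanishing at infinity fill out every fiber, and (iv) the sets `U_{F,ε}` form a base. -/
structure HilbertBundle (Y : Type) [TopologicalSpace Y] where
  H : Y → Type
  [nacg : ∀ y, NormedAddCommGroup (H y)]
  [ips : ∀ y, InnerProductSpace ℂ (H y)]
  [cpl : ∀ y, CompleteSpace (H y)]
  topE : TopologicalSpace ((y : Y) × H y)
  secondCountable : @SecondCountableTopology ((y : Y) × H y) topE
  add_cont : @Continuous {p : ((y : Y) × H y) × ((y : Y) × H y) // p.1.1 = p.2.1}
      ((y : Y) × H y)
      (@instTopologicalSpaceSubtype _ _ (@instTopologicalSpaceProd _ _ topE topE)) topE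
      (fun p => ⟨p.1.1.1, p.1.1.2 + cast (congrArg H p.2).symm p.1.2.2⟩)
  smul_cont : @Continuous (ℂ × (y : Y) × H y) ((y : Y) × H y)
      (@instTopologicalSpaceProd _ _ _ topE) topE
      (fun p => ⟨p.2.1, p.1 • p.2.2⟩)
  norm_cont : ∀ F ∈ C0Sections H topE, Continuous fun y => ‖F y‖
  fiber_full : ∀ (y : Y) (v : H y), ∃ F ∈ C0Sections H topE, F y = v
  isBasis : @TopologicalSpace.IsTopologicalBasis ((y : Y) × H y) topE
      {S | ∃ (U : Set Y) (F : (y : Y) → H y) (ε : ℝ), IsOpen U ∧ F ∈ C0Sections H topE ∧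
        0 < ε ∧ S = {e | e.1 ∈ U ∧ ‖e.2 - F e.1‖ < ε}}

attribute [instance] HilbertBundle.nacg HilbertBundle.ips HilbertBundle.cpl

/-- A Hilbert `C₀(Y)`-module structure on `P`: a right `C₀(Y)`-module action and a
`C₀(Y)`-valued inner product, complete for the norm `‖p‖ = ‖⟨p,p⟩‖^{1/2}` (completeness
being recorded by a `CompleteSpace` instance on `P` at use sites). -/
class HilbertCzeroModule (Y : Type) [TopologicalSpace Y] (P : Type)
    [NormedAddCommGroup P] [NormedSpace ℂ P] where
  msmul : P → C₀(Y, ℂ) → P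
  minner : P → P → C₀(Y, ℂ)
  msmul_add_left : ∀ (p q : P) (f : C₀(Y, ℂ)), msmul (p + q) f = msmul p f + msmul q f
  msmul_add_right : ∀ (p : P) (f g : C₀(Y, ℂ)), msmul p (f + g) = msmul p f + msmul p g
  msmul_mul : ∀ (p : P) (f g : C₀(Y, ℂ)), msmul (msmul p f) g = msmul p (f * g)
  msmul_csmul_left : ∀ (c : ℂ) (p : P) (f : C₀(Y, ℂ)), msmul (c • p) f = c • msmul p f
  msmul_csmul_right : ∀ (c : ℂ) (p : P) (f : C₀(Y, ℂ)), msmul p (c • f) = c • msmul p f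
  minner_add_right : ∀ p q r : P, minner p (q + r) = minner p q + minner p r
  minner_conj : ∀ p q : P, minner p q = star (minner q p)
  minner_csmul_right : ∀ (c : ℂ) (p q : P), minner p (c • q) = c • minner p q
  minner_msmul_right : ∀ (p q : P) (f : C₀(Y, ℂ)), minner p (msmul q f) = minner p q * f
  minner_self_re_nonneg : ∀ (p : P) (y : Y), 0 ≤ (minner p p y).re
  minner_self_im : ∀ (p : P) (y : Y), (minner p p y).im = 0
  norm_eq : ∀ p : P, ‖p‖ = Real.sqrt ‖minner p p‖

/-- The module action, with the base space explicit. -/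
def modSMul (Y : Type) [TopologicalSpace Y] {P : Type} [NormedAddCommGroup P]
    [NormedSpace ℂ P] [HilbertCzeroModule Y P] (p : P) (f : C₀(Y, ℂ)) : P :=
  HilbertCzeroModule.msmul p f

/-- The `C₀(Y)`-valued inner product, with the base space explicit. -/
def modIP (Y : Type) [TopologicalSpace Y] {P : Type} [NormedAddCommGroup P]
    [NormedSpace ℂ P] [HilbertCzeroModule Y P] (p q : P) : C₀(Y, ℂ) :=
  HilbertCzeroModule.minner p q

variable (Y : Type) [TopologicalSpace Y]
variable (P : Type) [NormedAddCommGroup P] [NormedSpace ℂ P] [HilbertCzeroModule Y P]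

/-- `I_y P`: the closed submodule generated by products `p·f` with `f(y) = 0`. -/
def fiberIdeal (y : Y) : Submodule ℂ P :=
  Submodule.span ℂ {x | ∃ (f : C₀(Y, ℂ)) (p : P), f y = 0 ∧ x = modSMul Y p f}

/-- The fiber `P_y = P / I_y P` of the Hilbert bundle associated to `P`. -/
abbrev Fib (y : Y) : Type := P ⧸ fiberIdeal Y P y

/-- `p ↦ p̂(y)`, the image of `p` in the fiber `P_y`. -/
def fibMk (y : Y) : P → Fib Y P y := Submodule.Quotient.mk

/-- The fiber norm of `p̂(y)`, computed from a representative. -/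
def fibNormRep (y : Y) (p : P) : ℝ := Real.sqrt ((modIP Y p p) y).re

/-- The norm on the fiber `P_y` (the common value of `fibNormRep` over representatives). -/
def fibNormQ (y : Y) (h : Fib Y P y) : ℝ :=
  sInf {r | ∃ p : P, h = fibMk Y P y p ∧ r = fibNormRep Y P y p}

/-- The total space `E_P = ⊔_y P_y` of the bundle associated to `P`. -/
abbrev TotalP : Type := (y : Y) × Fib Y P y

/-- The basic sets `U_{p,ε}` of the bundle `E_P`. -/
def basisP : Set (Set (TotalP Y P)) :=
  {S | ∃ (U : Set Y) (p : P) (ε : ℝ), IsOpen U ∧ 0 < ε ∧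
    S = {e : TotalP Y P | e.1 ∈ U ∧ fibNormQ Y P e.1 (e.2 - fibMk Y P e.1 p) < ε}}

/-- The topology on `E_P` generated by the sets `U_{p,ε}`. -/
def topEP : TopologicalSpace (TotalP Y P) := TopologicalSpace.generateFrom (basisP Y P)

/-- The continuous sections of `E_P` vanishing at infinity. -/
def C0SectionsP : Set ((y : Y) → Fib Y P y) :=
  {F | @Continuous Y (TotalP Y P) _ (topEP Y P) (fun y => ⟨y, F y⟩) ∧
    Tendsto (fun y => fibNormQ Y P y (F y)) (cocompact Y) (nhds 0)}

/-- The section `p̂` associated to `p ∈ P`. -/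
def hatSec (p : P) : (y : Y) → Fib Y P y := fun y => fibMk Y P y p

/-- Transport between fibers of `E_P` over equal base points. -/
def fcast {y z : Y} (h : y = z) : Fib Y P y → Fib Y P z := fun v => h ▸ v


variable (Y : Type) [TopologicalSpace Y]

/-- A second countable locally compact Hausdorff proper topological groupoid with unit
space `Y`.  Multiplication is recorded as a total map which is only constrained on
composable pairs. -/
structure LCGroupoid where
  G : Type
  [topG : TopologicalSpace G]
  [t2G : T2Space G]
  [lcG : LocallyCompactSpace G]
  [scG : SecondCountableTopology G]
  [mG : MeasurableSpace G]
  [bG : BorelSpace G]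
  r : G → Y
  s : G → Y
  unit : Y → G
  mul : G → G → G
  inv : G → G
  unit_embedding : Topology.IsEmbedding unit
  r_unit : ∀ y, r (unit y) = y
  s_unit : ∀ y, s (unit y) = y
  r_cont : Continuous r
  s_cont : Continuous s
  inv_cont : Continuous inv
  mul_cont : Continuous fun p : {p : G × G // s p.1 = r p.2} => mul p.1.1 p.1.2
  r_mul : ∀ g h, s g = r h → r (mul g h) = r g
  s_mul : ∀ g h, s g = r h → s (mul g h) = s h
  mul_assoc : ∀ g h k, s g = r h → s h = r k → mul (mul g h) k = mul g (mul h k)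
  mul_unit : ∀ g, mul g (unit (s g)) = g
  unit_mul : ∀ g, mul (unit (r g)) g = g
  r_inv : ∀ g, r (inv g) = s g
  s_inv : ∀ g, s (inv g) = r g
  mul_inv : ∀ g, mul g (inv g) = unit (r g)
  inv_mul : ∀ g, mul (inv g) g = unit (s g)
  proper : IsProperMap fun g => (r g, s g)

attribute [instance] LCGroupoid.topG LCGroupoid.t2G LCGroupoid.lcG LCGroupoid.scG
  LCGroupoid.mG LCGroupoid.bG

variable (Gp : LCGroupoid Y)

/-- A left Haar system `{λ^y}` for the groupoid `Gp`:  `λ^y` is a Radon-type measure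
concentrated on `G^y = r⁻¹(y)` with support `G^y`, varying continuously, and
left invariant. -/
structure HaarSystem where
  lam : Y → MeasureTheory.Measure Gp.G
  concentrated : ∀ y, lam y ((Gp.r ⁻¹' {y})ᶜ) = 0
  full : ∀ (y : Y) (U : Set Gp.G), IsOpen U → (U ∩ Gp.r ⁻¹' {y}).Nonempty → lam y U ≠ 0
  finiteOnCompacts : ∀ (y : Y) (K : Set Gp.G), IsCompact K → lam y K ≠ ⊤
  integral_continuous : ∀ F : Gp.G → ℂ, Continuous F → HasCompactSupport F →
    Continuous fun y => ∫ g, F g ∂(lam y)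
  left_invariant : ∀ (g₀ : Gp.G) (F : Gp.G → ℂ), Continuous F → HasCompactSupport F →
    ∫ g, F (Gp.mul g₀ g) ∂(lam (Gp.s g₀)) = ∫ g, F g ∂(lam (Gp.r g₀))

/-- Continuous compactly supported functions on the groupoid `Gp`. -/
def CcFun : Type := {F : Gp.G → ℂ // Continuous F ∧ HasCompactSupport F}


section GroupoidActions

variable {Y : Type} [TopologicalSpace Y] (Gp : LCGroupoid Y)
variable (P : Type) [NormedAddCommGroup P] [NormedSpace ℂ P] [HilbertCzeroModule Y P]

/-- A continuous, unitary left action of the groupoid `Gp` on the Hilbert bundle `E_P`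
associated to the Hilbert `C₀(Y)`-module `P`: this is the datum making `P` a
`G`-Hilbert module. -/
structure GAction where
  act : (g : Gp.G) → Fib Y P (Gp.s g) → Fib Y P (Gp.r g)
  act_add : ∀ (g : Gp.G) (v w : Fib Y P (Gp.s g)), act g (v + w) = act g v + act g w
  act_csmul : ∀ (g : Gp.G) (c : ℂ) (v : Fib Y P (Gp.s g)), act g (c • v) = c • act g v
  act_norm : ∀ (g : Gp.G) (v : Fib Y P (Gp.s g)),
    fibNormQ Y P (Gp.r g) (act g v) = fibNormQ Y P (Gp.s g) v
  act_surjective : ∀ g : Gp.G, Function.Surjective (act g)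
  act_unit : ∀ (y : Y) (v : Fib Y P y),
    act (Gp.unit y) (fcast Y P (Gp.s_unit y).symm v) = fcast Y P (Gp.r_unit y).symm v
  act_mul : ∀ (g h : Gp.G) (hc : Gp.s g = Gp.r h) (v : Fib Y P (Gp.s h)),
    act (Gp.mul g h) (fcast Y P (Gp.s_mul g h hc).symm v) =
      fcast Y P (Gp.r_mul g h hc).symm (act g (fcast Y P hc.symm (act h v)))
  act_cont : @Continuous {q : Gp.G × TotalP Y P // Gp.s q.1 = q.2.1} (TotalP Y P)
    (@instTopologicalSpaceSubtype _ _ (@instTopologicalSpaceProd _ _ _ (topEP Y P)))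
    (topEP Y P)
    (fun q => ⟨Gp.r q.1.1, act q.1.1 (fcast Y P q.2.symm q.1.2.2)⟩)

variable {Gp P}
variable {Q : Type} [NormedAddCommGroup Q] [NormedSpace ℂ Q] [HilbertCzeroModule Y Q]

/-- A `G`-equivariant unitary isomorphism of `G`-Hilbert modules:  a bijective,
`ℂ`-linear, `C₀(Y)`-linear, inner-product preserving map intertwining the `G`-actions
on the associated Hilbert bundles. -/
def IsGEquivariantUnitary (T : P → Q) (AP : GAction Gp P) (AQ : GAction Gp Q) : Prop :=
  Function.Bijective T ∧
  (∀ p p' : P, T (p + p') = T p + T p') ∧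
  (∀ (c : ℂ) (p : P), T (c • p) = c • T p) ∧
  (∀ (p : P) (f : C₀(Y, ℂ)), T (modSMul Y p f) = modSMul Y (T p) f) ∧
  (∀ p p' : P, modIP Y (T p) (T p') = modIP Y p p') ∧
  (∀ (g : Gp.G) (p p' : P),
      AP.act g (fibMk Y P (Gp.s g) p) = fibMk Y P (Gp.r g) p' →
      AQ.act g (fibMk Y Q (Gp.s g) (T p)) = fibMk Y Q (Gp.r g) (T p'))

/-- Equivalence of `G`-Hilbert modules: existence of a `G`-equivariant unitary. -/
def GEquiv (AP : GAction Gp P) (AQ : GAction Gp Q) : Prop :=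
  ∃ T : P → Q, IsGEquivariantUnitary T AP AQ

end GroupoidActions

section ModuleConstructions

variable {Y : Type} [TopologicalSpace Y] (Gp : LCGroupoid Y)

/-- Data exhibiting a Hilbert `C₀(Y)`-module `PG` as the completion `P_G` of the
pre-Hilbert `C₀(Y)`-module `C_c(G)`, with module action `F·f = F·(f∘r)` and inner
product `⟨F₁,F₂⟩(y) = ∫_{G^y} conj F₁ · F₂ dλ^y`. -/
structure PGData (hs : HaarSystem Y Gp) (PG : Type) [NormedAddCommGroup PG]
    [NormedSpace ℂ PG] [HilbertCzeroModule Y PG] where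
  emb : CcFun Y Gp → PG
  emb_add : ∀ F₁ F₂ F₃ : CcFun Y Gp, F₃.1 = F₁.1 + F₂.1 → emb F₃ = emb F₁ + emb F₂
  emb_csmul : ∀ (c : ℂ) (F₁ F₃ : CcFun Y Gp), F₃.1 = c • F₁.1 → emb F₃ = c • emb F₁
  emb_msmul : ∀ (F₁ F₃ : CcFun Y Gp) (f : C₀(Y, ℂ)),
    F₃.1 = (fun g => F₁.1 g * f (Gp.r g)) → emb F₃ = modSMul Y (emb F₁) f
  emb_inner : ∀ (F₁ F₂ : CcFun Y Gp) (y : Y),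
    modIP Y (emb F₁) (emb F₂) y = ∫ g, conj (F₁.1 g) * F₂.1 g ∂(hs.lam y)
  emb_dense : ∀ (p : PG) (ε : ℝ), 0 < ε → ∃ F : CcFun Y Gp, ‖p - emb F‖ < ε

variable {Gp}

/-- The natural left translation action of `G` on `L²(G) = E_{P_G}`, characterized on
the dense image of `C_c(G)` by `(g·ξ)(h) = ξ(g⁻¹h)` for `h ∈ G^{r(g)}`. -/
def IsNaturalPGAction {hs : HaarSystem Y Gp} {PG : Type} [NormedAddCommGroup PG]
    [NormedSpace ℂ PG] [HilbertCzeroModule Y PG] (d : PGData Gp hs PG)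
    (A : GAction Gp PG) : Prop :=
  ∀ (g : Gp.G) (F F' : CcFun Y Gp),
    (∀ h : Gp.G, Gp.r h = Gp.r g → F'.1 h = F.1 (Gp.mul (Gp.inv g) h)) →
    A.act g (fibMk Y PG (Gp.s g) (d.emb F)) = fibMk Y PG (Gp.r g) (d.emb F')

end ModuleConstructions

section TensorSum

/-- Data exhibiting `R` as the interior tensor product `P ⊗_{C₀(Y)} Q` of two Hilbert
`C₀(Y)`-modules: a balanced bilinear map with dense span satisfying
`⟨p₁⊗q₁, p₂⊗q₂⟩ = ⟨p₁,p₂⟩⟨q₁,q₂⟩`. -/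
structure TensorData (Y : Type) [TopologicalSpace Y] (P Q R : Type)
    [NormedAddCommGroup P] [NormedSpace ℂ P] [HilbertCzeroModule Y P]
    [NormedAddCommGroup Q] [NormedSpace ℂ Q] [HilbertCzeroModule Y Q]
    [NormedAddCommGroup R] [NormedSpace ℂ R] [HilbertCzeroModule Y R] where
  t : P → Q → R
  t_add_left : ∀ (p p' : P) (q : Q), t (p + p') q = t p q + t p' q
  t_add_right : ∀ (p : P) (q q' : Q), t p (q + q') = t p q + t p q'
  t_csmul_left : ∀ (c : ℂ) (p : P) (q : Q), t (c • p) q = c • t p q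
  t_csmul_right : ∀ (c : ℂ) (p : P) (q : Q), t p (c • q) = c • t p q
  t_msmul_left : ∀ (p : P) (q : Q) (f : C₀(Y, ℂ)), t (modSMul Y p f) q = modSMul Y (t p q) f
  t_msmul_right : ∀ (p : P) (q : Q) (f : C₀(Y, ℂ)), t p (modSMul Y q f) = modSMul Y (t p q) f
  t_inner : ∀ (p p' : P) (q q' : Q),
    modIP Y (t p q) (t p' q') = modIP Y p p' * modIP Y q q'
  t_dense : ∀ (x : R) (ε : ℝ), 0 < ε →
    ∃ (n : ℕ) (ps : Fin n → P) (qs : Fin n → Q), ‖x - ∑ i, t (ps i) (qs i)‖ < ε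

/-- Data exhibiting `S` as the Hilbert `C₀(Y)`-module direct sum `P ⊕ Q`. -/
structure SumData (Y : Type) [TopologicalSpace Y] (P Q S : Type)
    [NormedAddCommGroup P] [NormedSpace ℂ P] [HilbertCzeroModule Y P]
    [NormedAddCommGroup Q] [NormedSpace ℂ Q] [HilbertCzeroModule Y Q]
    [NormedAddCommGroup S] [NormedSpace ℂ S] [HilbertCzeroModule Y S] where
  inl : P → S
  inr : Q → S
  inl_add : ∀ p p' : P, inl (p + p') = inl p + inl p'
  inr_add : ∀ q q' : Q, inr (q + q') = inr q + inr q'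
  inl_csmul : ∀ (c : ℂ) (p : P), inl (c • p) = c • inl p
  inr_csmul : ∀ (c : ℂ) (q : Q), inr (c • q) = c • inr q
  inl_msmul : ∀ (p : P) (f : C₀(Y, ℂ)), inl (modSMul Y p f) = modSMul Y (inl p) f
  inr_msmul : ∀ (q : Q) (f : C₀(Y, ℂ)), inr (modSMul Y q f) = modSMul Y (inr q) f
  inner_ll : ∀ p p' : P, modIP Y (inl p) (inl p') = modIP Y p p'
  inner_rr : ∀ q q' : Q, modIP Y (inr q) (inr q') = modIP Y q q'
  inner_lr : ∀ (p : P) (q : Q), modIP Y (inl p) (inr q) = 0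
  total : ∀ x : S, ∃ (p : P) (q : Q), x = inl p + inr q

/-- Data exhibiting `S` as the Hilbert `C₀(Y)`-module direct sum `⊕_{i=1}^∞ P i` of a
sequence of Hilbert `C₀(Y)`-modules: the module of sequences `{p_i}`, `p_i ∈ P i`, with
`Σ_i ⟨p_i,p_i⟩` convergent in `C₀(Y)`. -/
structure InftySumData (Y : Type) [TopologicalSpace Y] (Pf : ℕ → Type) (S : Type)
    [∀ i, NormedAddCommGroup (Pf i)] [∀ i, NormedSpace ℂ (Pf i)]
    [∀ i, HilbertCzeroModule Y (Pf i)]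
    [NormedAddCommGroup S] [NormedSpace ℂ S] [HilbertCzeroModule Y S] where
  proj : (i : ℕ) → S → Pf i
  proj_add : ∀ (i : ℕ) (x x' : S), proj i (x + x') = proj i x + proj i x'
  proj_csmul : ∀ (i : ℕ) (c : ℂ) (x : S), proj i (c • x) = c • proj i x
  proj_msmul : ∀ (i : ℕ) (x : S) (f : C₀(Y, ℂ)),
    proj i (modSMul Y x f) = modSMul Y (proj i x) f
  proj_inner : ∀ x x' : S, HasSum (fun i => modIP Y (proj i x) (proj i x')) (modIP Y x x')
  proj_injective : ∀ x x' : S, (∀ i, proj i x = proj i x') → x = x'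
  proj_surjective : ∀ u : (i : ℕ) → Pf i, Summable (fun i => modIP Y (u i) (u i)) →
    ∃ x : S, ∀ i, proj i x = u i

variable {Y : Type} [TopologicalSpace Y] {Gp : LCGroupoid Y}
variable {P Q R S : Type}
  [NormedAddCommGroup P] [NormedSpace ℂ P] [HilbertCzeroModule Y P]
  [NormedAddCommGroup Q] [NormedSpace ℂ Q] [HilbertCzeroModule Y Q]
  [NormedAddCommGroup R] [NormedSpace ℂ R] [HilbertCzeroModule Y R]
  [NormedAddCommGroup S] [NormedSpace ℂ S] [HilbertCzeroModule Y S]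

/-- The diagonal `G`-action on a tensor product `P ⊗_{C₀(Y)} Q`. -/
def IsDiagonalAction (td : TensorData Y P Q R) (AP : GAction Gp P) (AQ : GAction Gp Q)
    (AR : GAction Gp R) : Prop :=
  ∀ (g : Gp.G) (p p' : P) (q q' : Q),
    AP.act g (fibMk Y P (Gp.s g) p) = fibMk Y P (Gp.r g) p' →
    AQ.act g (fibMk Y Q (Gp.s g) q) = fibMk Y Q (Gp.r g) q' →
    AR.act g (fibMk Y R (Gp.s g) (td.t p q)) = fibMk Y R (Gp.r g) (td.t p' q')

/-- The coordinatewise `G`-action on a direct sum `P ⊕ Q`. -/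
def IsCoordinateSumAction (sd : SumData Y P Q S) (AP : GAction Gp P) (AQ : GAction Gp Q)
    (AS : GAction Gp S) : Prop :=
  (∀ (g : Gp.G) (p p' : P),
    AP.act g (fibMk Y P (Gp.s g) p) = fibMk Y P (Gp.r g) p' →
    AS.act g (fibMk Y S (Gp.s g) (sd.inl p)) = fibMk Y S (Gp.r g) (sd.inl p')) ∧
  (∀ (g : Gp.G) (q q' : Q),
    AQ.act g (fibMk Y Q (Gp.s g) q) = fibMk Y Q (Gp.r g) q' →
    AS.act g (fibMk Y S (Gp.s g) (sd.inr q)) = fibMk Y S (Gp.r g) (sd.inr q'))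

/-- The coordinatewise `G`-action on an infinite direct sum `⊕_{i=1}^∞ P i`. -/
def IsCoordinateInftyAction {Pf : ℕ → Type} [∀ i, NormedAddCommGroup (Pf i)]
    [∀ i, NormedSpace ℂ (Pf i)] [∀ i, HilbertCzeroModule Y (Pf i)]
    (d : InftySumData Y Pf S) (Af : (i : ℕ) → GAction Gp (Pf i))
    (AS : GAction Gp S) : Prop :=
  ∀ (g : Gp.G) (x x' : S),
    AS.act g (fibMk Y S (Gp.s g) x) = fibMk Y S (Gp.r g) x' →
    ∀ i, (Af i).act g (fibMk Y (Pf i) (Gp.s g) (d.proj i x)) =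
      fibMk Y (Pf i) (Gp.r g) (d.proj i x')

end TensorSum


/-! ### Auxiliary lemmas for Proposition 2.3 -/

section AuxAlgebra

variable {Y : Type} [TopologicalSpace Y] {P : Type} [NormedAddCommGroup P]
  [NormedSpace ℂ P] [HilbertCzeroModule Y P]

lemma C0_add_apply (f g : C₀(Y, ℂ)) (y : Y) : (f + g) y = f y + g y := rfl
lemma C0_smul_apply (c : ℂ) (f : C₀(Y, ℂ)) (y : Y) : (c • f) y = c * f y := rfl
lemma C0_star_apply (f : C₀(Y, ℂ)) (y : Y) : (star f) y = star (f y) := rfl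

lemma C0_norm_apply_le (f : C₀(Y, ℂ)) (y : Y) : ‖f y‖ ≤ ‖f‖ := by
  rw [← ZeroAtInftyContinuousMap.norm_toBCF_eq_norm]
  exact BoundedContinuousFunction.norm_coe_le_norm f.toBCF y

lemma modIP_add_right (p q r : P) : modIP Y p (q + r) = modIP Y p q + modIP Y p r :=
  HilbertCzeroModule.minner_add_right p q r

lemma modIP_conj (p q : P) : modIP Y p q = star (modIP Y q p) :=
  HilbertCzeroModule.minner_conj p q

lemma modIP_add_left (p q r : P) : modIP Y (p + q) r = modIP Y p r + modIP Y q r := by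
  calc modIP Y (p + q) r = star (modIP Y r (p + q)) := modIP_conj _ _
    _ = star (modIP Y r p + modIP Y r q) := by rw [modIP_add_right]
    _ = star (modIP Y r p) + star (modIP Y r q) := star_add _ _
    _ = modIP Y p r + modIP Y q r := by rw [← modIP_conj, ← modIP_conj]

lemma modIP_smul_right (c : ℂ) (p q : P) : modIP Y p (c • q) = c • modIP Y p q :=
  HilbertCzeroModule.minner_csmul_right c p q

lemma modIP_smul_left (c : ℂ) (p q : P) :
    modIP Y (c • p) q = star c • modIP Y p q := by
  calc modIP Y (c • p) q = star (modIP Y q (c • p)) := modIP_conj _ _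
    _ = star (c • modIP Y q p) := by rw [modIP_smul_right]
    _ = star c • star (modIP Y q p) := star_smul _ _
    _ = star c • modIP Y p q := by rw [← modIP_conj]

lemma modIP_zero_right (p : P) : modIP Y p 0 = 0 := by
  have h := modIP_add_right (Y := Y) p 0 0
  rw [add_zero] at h
  exact left_eq_add.mp h

lemma ip_expand (y : Y) (p q : P) :
    ((modIP Y (p + q) (p + q)) y).re
      = ((modIP Y p p) y).re + 2 * ((modIP Y p q) y).re + ((modIP Y q q) y).re := by
  have hqp : ((modIP Y q p) y).re = ((modIP Y p q) y).re := by
    rw [modIP_conj q p, C0_star_apply]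
    simp
  rw [modIP_add_left, C0_add_apply, modIP_add_right, modIP_add_right,
    C0_add_apply, C0_add_apply]
  simp only [Complex.add_re]
  rw [hqp]; ring

lemma ip_smul_self (y : Y) (c : ℂ) (p : P) :
    ((modIP Y (c • p) (c • p)) y).re = ‖c‖ ^ 2 * ((modIP Y p p) y).re := by
  rw [modIP_smul_right, modIP_smul_left, C0_smul_apply, C0_smul_apply, ← mul_assoc]
  have hc : c * star c = ((‖c‖ ^ 2 : ℝ) : ℂ) := by
    rw [Complex.star_def, Complex.mul_conj']
    norm_cast
    try rw [Complex.normSq_eq_abs, Complex.norm_eq_abs]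
  rw [hc]
  rw [Complex.re_ofReal_mul]

lemma fibNormRep_def (y : Y) (p : P) :
    fibNormRep Y P y p = Real.sqrt ((modIP Y p p) y).re := rfl

lemma fibNormRep_nonneg (y : Y) (p : P) : 0 ≤ fibNormRep Y P y p := Real.sqrt_nonneg _

lemma fibNormRep_zero (y : Y) : fibNormRep Y P y 0 = 0 := by
  rw [fibNormRep_def, modIP_zero_right]
  simp

lemma fibNormRep_smul (y : Y) (c : ℂ) (p : P) :
    fibNormRep Y P y (c • p) = ‖c‖ * fibNormRep Y P y p := by
  rw [fibNormRep_def, fibNormRep_def, ip_smul_self,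
    Real.sqrt_mul (sq_nonneg _), Real.sqrt_sq (norm_nonneg _)]

lemma fibNormRep_neg (y : Y) (p : P) : fibNormRep Y P y (-p) = fibNormRep Y P y p := by
  rw [← neg_one_smul ℂ p, fibNormRep_smul]
  simp

lemma fibNormRep_add_le (y : Y) (p q : P) :
    fibNormRep Y P y (p + q) ≤ fibNormRep Y P y p + fibNormRep Y P y q := by
  rw [fibNormRep_def, fibNormRep_def, fibNormRep_def]
  set a := ((modIP Y p p) y).re with hadef
  set t := ((modIP Y p q) y).re with htdef
  set c := ((modIP Y q q) y).re with hcdef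
  have ha : 0 ≤ a := HilbertCzeroModule.minner_self_re_nonneg p y
  have hc : 0 ≤ c := HilbertCzeroModule.minner_self_re_nonneg q y
  have key : ∀ x : ℝ, 0 ≤ c * (x * x) + (2 * t) * x + a := by
    intro x
    have h0 : 0 ≤ ((modIP Y (p + (x : ℂ) • q) (p + (x : ℂ) • q)) y).re :=
      HilbertCzeroModule.minner_self_re_nonneg _ y
    have e1 : ((modIP Y p ((x : ℂ) • q)) y).re = x * t := by
      rw [modIP_smul_right, C0_smul_apply]
      simp [htdef]
    have e2 : ((modIP Y ((x : ℂ) • q) ((x : ℂ) • q)) y).re = (x * x) * c := by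
      rw [ip_smul_self, Complex.norm_real, Real.norm_eq_abs, sq_abs, pow_two]
    have e3 := ip_expand y p ((x : ℂ) • q)
    rw [e1, e2] at e3
    rw [e3] at h0
    linarith
  have hd := discrim_le_zero key
  have ht2 : t ^ 2 ≤ c * a := by
    unfold discrim at hd
    nlinarith
  have ht : t ≤ Real.sqrt a * Real.sqrt c := by
    have h1 : t ≤ |t| := le_abs_self t
    have h2 : |t| = Real.sqrt (t ^ 2) := (Real.sqrt_sq_eq_abs t).symm
    have h3 : Real.sqrt (t ^ 2) ≤ Real.sqrt (a * c) := Real.sqrt_le_sqrt (by nlinarith)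
    rw [Real.sqrt_mul ha] at h3
    linarith
  have hsum := ip_expand y p q
  rw [hsum]
  have hle : a + 2 * t + c ≤ (Real.sqrt a + Real.sqrt c) ^ 2 := by
    have sa := Real.sq_sqrt ha
    have sc := Real.sq_sqrt hc
    nlinarith [Real.sqrt_nonneg a, Real.sqrt_nonneg c]
  calc Real.sqrt (a + 2 * t + c) ≤ Real.sqrt ((Real.sqrt a + Real.sqrt c) ^ 2) :=
        Real.sqrt_le_sqrt hle
    _ = Real.sqrt a + Real.sqrt c :=
        Real.sqrt_sq (by positivity)

lemma fibNormRep_le_norm (y : Y) (p : P) : fibNormRep Y P y p ≤ ‖p‖ := by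
  rw [HilbertCzeroModule.norm_eq (Y := Y) p]
  show Real.sqrt ((modIP Y p p) y).re ≤ Real.sqrt ‖modIP Y p p‖
  apply Real.sqrt_le_sqrt
  calc ((modIP Y p p) y).re ≤ ‖(modIP Y p p) y‖ := by
        exact Complex.re_le_norm _
    _ ≤ ‖modIP Y p p‖ := C0_norm_apply_le _ y

lemma continuous_fibNormRep (p : P) : Continuous fun z : Y => fibNormRep Y P z p := by
  have h : Continuous fun z : Y => ((modIP Y p p) z).re :=
    Complex.continuous_re.comp (map_continuous (modIP Y p p))
  exact Real.continuous_sqrt.comp h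

lemma tendsto_fibNormRep_cocompact (p : P) :
    Tendsto (fun z : Y => fibNormRep Y P z p) (cocompact Y) (𝓝 0) := by
  have h1 : Tendsto (fun z : Y => (modIP Y p p) z) (cocompact Y) (𝓝 0) :=
    zero_at_infty (modIP Y p p)
  have h2 : Tendsto (fun z : Y => ((modIP Y p p) z).re) (cocompact Y) (𝓝 0) := by
    simpa [Function.comp_def] using (Complex.continuous_re.tendsto 0).comp h1
  simpa [Function.comp_def, fibNormRep] using (Real.continuous_sqrt.tendsto 0).comp h2

lemma ideal_ip_zero {y : Y} {m : P} (hm : m ∈ fiberIdeal Y P y) (p : P) :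
    (modIP Y p m) y = 0 := by
  induction hm using Submodule.span_induction with
  | mem x hx =>
    obtain ⟨f, q, hf, rfl⟩ := hx
    rw [show modIP Y p (modSMul Y q f) = modIP Y p q * f from
      HilbertCzeroModule.minner_msmul_right p q f]
    show (modIP Y p q) y * f y = 0
    rw [hf, mul_zero]
  | zero => rw [modIP_zero_right]; rfl
  | add a b _ _ ha hb => rw [modIP_add_right, C0_add_apply, ha, hb, add_zero]
  | smul c a _ h => rw [modIP_smul_right, C0_smul_apply, h, mul_zero]

lemma fibNormRep_coset {y : Y} {m : P} (hm : m ∈ fiberIdeal Y P y) (p : P) :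
    fibNormRep Y P y (p + m) = fibNormRep Y P y p := by
  rw [fibNormRep_def, fibNormRep_def, ip_expand, ideal_ip_zero hm p, ideal_ip_zero hm m]
  simp

lemma fibMk_surj (y : Y) : Function.Surjective (fibMk Y P y) :=
  Submodule.Quotient.mk_surjective _

lemma fibNormQ_mk (y : Y) (p : P) :
    fibNormQ Y P y (fibMk Y P y p) = fibNormRep Y P y p := by
  have hset : {r | ∃ q : P, fibMk Y P y p = fibMk Y P y q ∧ r = fibNormRep Y P y q}
      = {fibNormRep Y P y p} := by
    ext r
    simp only [Set.mem_setOf_eq, Set.mem_singleton_iff]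
    constructor
    · rintro ⟨q, hq, rfl⟩
      have hpq : p - q ∈ fiberIdeal Y P y := (Submodule.Quotient.eq _).mp hq
      have hm : q - p ∈ fiberIdeal Y P y := by
        have := (fiberIdeal Y P y).neg_mem hpq
        rwa [neg_sub] at this
      rw [show q = p + (q - p) by abel, fibNormRep_coset hm]
    · rintro rfl
      exact ⟨p, rfl, rfl⟩
  show sInf {r | ∃ q : P, fibMk Y P y p = fibMk Y P y q ∧ r = fibNormRep Y P y q} = _
  rw [hset]
  exact csInf_singleton _

lemma fibNormQ_mk_sub (y : Y) (a b : P) :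
    fibNormQ Y P y (fibMk Y P y a - fibMk Y P y b) = fibNormRep Y P y (a - b) := by
  have h : fibMk Y P y a - fibMk Y P y b = fibMk Y P y (a - b) := rfl
  rw [h, fibNormQ_mk]

lemma fibNormQ_nonneg (y : Y) (h : Fib Y P y) : 0 ≤ fibNormQ Y P y h := by
  obtain ⟨a, rfl⟩ := fibMk_surj y h
  rw [fibNormQ_mk]
  exact fibNormRep_nonneg y a

lemma fibNormQ_zero (y : Y) : fibNormQ Y P y 0 = 0 := by
  rw [show (0 : Fib Y P y) = fibMk Y P y 0 from rfl, fibNormQ_mk, fibNormRep_zero]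

lemma fibNormQ_sub_le₃ (y : Y) (h k : Fib Y P y) (p r : P) :
    fibNormQ Y P y (h - k) ≤ fibNormQ Y P y (h - fibMk Y P y p)
      + fibNormRep Y P y (p - r) + fibNormQ Y P y (k - fibMk Y P y r) := by
  obtain ⟨u, rfl⟩ := fibMk_surj y h
  obtain ⟨w, rfl⟩ := fibMk_surj y k
  rw [fibNormQ_mk_sub, fibNormQ_mk_sub, fibNormQ_mk_sub]
  rw [show u - w = (u - p) + (p - r) + (r - w) by abel]
  have h2 := fibNormRep_add_le y ((u - p) + (p - r)) (r - w)
  have h3 := fibNormRep_add_le y (u - p) (p - r)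
  have h4 : fibNormRep Y P y (r - w) = fibNormRep Y P y (w - r) := by
    rw [show r - w = -(w - r) by abel, fibNormRep_neg]
  linarith

lemma fibNormQ_tri (y : Y) (h : Fib Y P y) (a p : P) :
    fibNormQ Y P y (h - fibMk Y P y p)
      ≤ fibNormQ Y P y (h - fibMk Y P y a) + fibNormRep Y P y (a - p) := by
  have h1 := fibNormQ_sub_le₃ y h (fibMk Y P y p) a p
  rw [sub_self, fibNormQ_zero] at h1
  linarith

lemma abs_fibNormQ_sub_rep (y : Y) (h : Fib Y P y) (r : P) :
    |fibNormQ Y P y h - fibNormRep Y P y r|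
      ≤ fibNormQ Y P y (h - fibMk Y P y r) := by
  obtain ⟨b, rfl⟩ := fibMk_surj y h
  rw [fibNormQ_mk, fibNormQ_mk_sub, abs_sub_le_iff]
  constructor
  · have h1 := fibNormRep_add_le y (b - r) r
    rw [show b - r + r = b by abel] at h1
    linarith
  · have h1 := fibNormRep_add_le y (r - b) b
    rw [show r - b + b = r by abel] at h1
    have h4 : fibNormRep Y P y (r - b) = fibNormRep Y P y (b - r) := by
      rw [show r - b = -(b - r) by abel, fibNormRep_neg]
    linarith

lemma fibNormQ_add_sub_le (y : Y) (h k : Fib Y P y) (a b p : P) :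
    fibNormQ Y P y (h + k - fibMk Y P y p)
      ≤ fibNormQ Y P y (h - fibMk Y P y a) + fibNormQ Y P y (k - fibMk Y P y b)
        + fibNormRep Y P y (a + b - p) := by
  obtain ⟨u, rfl⟩ := fibMk_surj y h
  obtain ⟨w, rfl⟩ := fibMk_surj y k
  have he : fibMk Y P y u + fibMk Y P y w - fibMk Y P y p = fibMk Y P y (u + w - p) := rfl
  rw [he, fibNormQ_mk, fibNormQ_mk_sub, fibNormQ_mk_sub]
  rw [show u + w - p = (u - a) + (w - b) + (a + b - p) by abel]
  have h2 := fibNormRep_add_le y ((u - a) + (w - b)) (a + b - p)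
  have h3 := fibNormRep_add_le y (u - a) (w - b)
  linarith

lemma fibNormQ_smul_sub_le (y : Y) (h : Fib Y P y) (c c' : ℂ) (a p : P) :
    fibNormQ Y P y (c' • h - fibMk Y P y p)
      ≤ ‖c'‖ * fibNormQ Y P y (h - fibMk Y P y a) + ‖c' - c‖ * fibNormRep Y P y a
        + fibNormRep Y P y (c • a - p) := by
  obtain ⟨u, rfl⟩ := fibMk_surj y h
  have he : c' • fibMk Y P y u - fibMk Y P y p = fibMk Y P y (c' • u - p) := rfl
  rw [he, fibNormQ_mk, fibNormQ_mk_sub]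
  rw [show c' • u - p = c' • (u - a) + ((c' - c) • a + (c • a - p)) by
    rw [smul_sub, sub_smul]; abel]
  have h2 := fibNormRep_add_le y (c' • (u - a)) ((c' - c) • a + (c • a - p))
  have h3 := fibNormRep_add_le y ((c' - c) • a) (c • a - p)
  rw [fibNormRep_smul] at h2
  rw [fibNormRep_smul] at h3
  linarith

end AuxAlgebra

section BundleTop

variable (Y : Type) [TopologicalSpace Y] (P : Type) [NormedAddCommGroup P]
  [NormedSpace ℂ P] [HilbertCzeroModule Y P]

/-- The basic open sets `U_{p,ε}` as named sets. -/
def Bset (U : Set Y) (p : P) (ε : ℝ) : Set (TotalP Y P) :=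
  {e | e.1 ∈ U ∧ fibNormQ Y P e.1 (e.2 - fibMk Y P e.1 p) < ε}

lemma Bset_mem_basisP {U : Set Y} {p : P} {ε : ℝ} (hU : IsOpen U) (hε : 0 < ε) :
    Bset Y P U p ε ∈ basisP Y P :=
  ⟨U, p, ε, hU, hε, rfl⟩

lemma isOpen_Bset {U : Set Y} {p : P} {ε : ℝ} (hU : IsOpen U) (hε : 0 < ε) :
    IsOpen[topEP Y P] (Bset Y P U p ε) :=
  TopologicalSpace.isOpen_generateFrom_of_mem (Bset_mem_basisP Y P hU hε)

lemma mem_Bset_self {U : Set Y} {p : P} {ε : ℝ} {y : Y} (hy : y ∈ U) (hε : 0 < ε) :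
    (⟨y, fibMk Y P y p⟩ : TotalP Y P) ∈ Bset Y P U p ε := by
  refine ⟨hy, ?_⟩
  rw [sub_self, fibNormQ_zero]
  exact hε

lemma basisP_isBasis :
    @TopologicalSpace.IsTopologicalBasis (TotalP Y P) (topEP Y P) (basisP Y P) := by
  letI := topEP Y P
  refine ⟨?_, ?_, rfl⟩
  · intro t₁ ht₁ t₂ ht₂ x hx
    obtain ⟨U₁, p₁, ε₁, hU₁, hε₁, rfl⟩ := ht₁
    obtain ⟨U₂, p₂, ε₂, hU₂, hε₂, rfl⟩ := ht₂
    obtain ⟨y, h⟩ := x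
    obtain ⟨a, rfl⟩ := fibMk_surj y h
    obtain ⟨⟨hx1U, hx1n⟩, ⟨hx2U, hx2n⟩⟩ := hx
    rw [fibNormQ_mk_sub] at hx1n hx2n
    set d₁ := fibNormRep Y P y (a - p₁) with hd₁
    set d₂ := fibNormRep Y P y (a - p₂) with hd₂
    set η₁ := ε₁ - d₁ with hη₁
    set η₂ := ε₂ - d₂ with hη₂
    have hη₁p : 0 < η₁ := by linarith
    have hη₂p : 0 < η₂ := by linarith
    set V₁ := {z : Y | fibNormRep Y P z (a - p₁) < d₁ + η₁ / 2} with hV₁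
    set V₂ := {z : Y | fibNormRep Y P z (a - p₂) < d₂ + η₂ / 2} with hV₂
    have hV₁o : IsOpen V₁ := isOpen_lt (continuous_fibNormRep (a - p₁)) continuous_const
    have hV₂o : IsOpen V₂ := isOpen_lt (continuous_fibNormRep (a - p₂)) continuous_const
    refine ⟨Bset Y P ((U₁ ∩ U₂) ∩ (V₁ ∩ V₂)) a (min (η₁ / 2) (η₂ / 2)),
      Bset_mem_basisP Y P ((hU₁.inter hU₂).inter (hV₁o.inter hV₂o))
        (lt_min (by linarith) (by linarith)), ?_, ?_⟩
    · exact mem_Bset_self Y P ⟨⟨hx1U, hx2U⟩, ⟨by simp [hV₁]; linarith, by simp [hV₂]; linarith⟩⟩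
        (lt_min (by linarith) (by linarith))
    · rintro ⟨z, k⟩ ⟨⟨⟨hzU₁, hzU₂⟩, ⟨hzV₁, hzV₂⟩⟩, hkn⟩
      have ht₁ := fibNormQ_tri z k a p₁
      have ht₂ := fibNormQ_tri z k a p₂
      have hm₁ := min_le_left (η₁ / 2) (η₂ / 2)
      have hm₂ := min_le_right (η₁ / 2) (η₂ / 2)
      have hzV₁' : fibNormRep Y P z (a - p₁) < d₁ + η₁ / 2 := hzV₁
      have hzV₂' : fibNormRep Y P z (a - p₂) < d₂ + η₂ / 2 := hzV₂
      exact ⟨⟨hzU₁, by linarith⟩, ⟨hzU₂, by linarith⟩⟩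
  · ext e
    simp only [Set.mem_sUnion, Set.mem_univ, iff_true]
    obtain ⟨y, h⟩ := e
    obtain ⟨a, rfl⟩ := fibMk_surj y h
    exact ⟨Bset Y P Set.univ a 1, Bset_mem_basisP Y P isOpen_univ one_pos,
      mem_Bset_self Y P trivial one_pos⟩

lemma continuous_toEP {X : Type} [TopologicalSpace X] (f : X → TotalP Y P)
    (hf : ∀ (U : Set Y) (p : P) (ε : ℝ), IsOpen U → 0 < ε →
      IsOpen (f ⁻¹' Bset Y P U p ε)) :
    @Continuous X (TotalP Y P) _ (topEP Y P) f := by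
  rw [show topEP Y P = TopologicalSpace.generateFrom (basisP Y P) from rfl,
    continuous_generateFrom_iff]
  rintro S ⟨U, p, ε, hU, hε, rfl⟩
  exact hf U p ε hU hε

lemma hatSec_mem_C0 (p : P) : hatSec Y P p ∈ C0SectionsP Y P := by
  constructor
  · apply continuous_toEP
    intro U q ε hU hε
    have hpre : (fun y : Y => (⟨y, hatSec Y P p y⟩ : TotalP Y P)) ⁻¹' Bset Y P U q ε
        = U ∩ {z : Y | fibNormRep Y P z (p - q) < ε} := by
      ext z
      simp only [Set.mem_preimage, Set.mem_inter_iff, Set.mem_setOf_eq]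
      exact and_congr_right fun _ => by
        rw [show hatSec Y P p z - fibMk Y P z q = fibMk Y P z (p - q) from rfl, fibNormQ_mk]
    rw [hpre]
    exact hU.inter (isOpen_lt (continuous_fibNormRep (p - q)) continuous_const)
  · have heq : (fun y : Y => fibNormQ Y P y (hatSec Y P p y))
        = fun y : Y => fibNormRep Y P y p := funext fun y => fibNormQ_mk y p
    rw [heq]
    exact tendsto_fibNormRep_cocompact p

lemma fiber_full_EP (y : Y) (v : Fib Y P y) : ∃ F ∈ C0SectionsP Y P, F y = v := by
  obtain ⟨p, rfl⟩ := fibMk_surj y v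
  exact ⟨hatSec Y P p, hatSec_mem_C0 Y P p, rfl⟩

end BundleTop

section BundleMain

variable (Y : Type) [TopologicalSpace Y] (P : Type) [NormedAddCommGroup P]
  [NormedSpace ℂ P] [HilbertCzeroModule Y P]

lemma add_cont_EP :
    @Continuous {e : TotalP Y P × TotalP Y P // e.1.1 = e.2.1} (TotalP Y P)
      (@instTopologicalSpaceSubtype _ _
        (@instTopologicalSpaceProd _ _ (topEP Y P) (topEP Y P))) (topEP Y P)
      (fun e => ⟨e.1.1.1, e.1.1.2 + fcast Y P e.2.symm e.1.2.2⟩) := by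
  letI := topEP Y P
  apply continuous_toEP
  intro U p ε hU hε
  rw [isOpen_iff_forall_mem_open]
  rintro ⟨⟨⟨y, h⟩, ⟨y', k⟩⟩, (hyy : y = y')⟩ hx
  subst hyy
  obtain ⟨a, rfl⟩ := fibMk_surj y h
  obtain ⟨b, rfl⟩ := fibMk_surj y k
  have h2 : fibNormQ Y P y (fibMk Y P y (a + b - p)) < ε := hx.2
  rw [fibNormQ_mk] at h2
  set d₀ := fibNormRep Y P y (a + b - p) with hd₀
  set η := ε - d₀ with hη
  have hηp : 0 < η := by linarith
  set V := U ∩ {z : Y | fibNormRep Y P z (a + b - p) < d₀ + η / 3} with hV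
  have hVo : IsOpen V := hU.inter (isOpen_lt (continuous_fibNormRep (a + b - p)) continuous_const)
  have hyV : y ∈ V := ⟨hx.1, by simp only [Set.mem_setOf_eq]; linarith⟩
  refine ⟨Subtype.val ⁻¹' (Bset Y P V a (η / 3) ×ˢ Bset Y P V b (η / 3)), ?_, ?_, ?_⟩
  · rintro ⟨⟨⟨z, h'⟩, ⟨z', k'⟩⟩, (hz : z = z')⟩ ⟨⟨hzV, hn1⟩, ⟨hzV', hn2⟩⟩
    subst hz
    refine Set.mem_preimage.mpr ⟨hzV.1, ?_⟩
    show fibNormQ Y P z (h' + k' - fibMk Y P z p) < ε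
    have hb := fibNormQ_add_sub_le z h' k' a b p
    have hzV2 : fibNormRep Y P z (a + b - p) < d₀ + η / 3 := hzV.2
    have hn1' : fibNormQ Y P z (h' - fibMk Y P z a) < η / 3 := hn1
    have hn2' : fibNormQ Y P z (k' - fibMk Y P z b) < η / 3 := hn2
    linarith
  · exact ((isOpen_Bset Y P hVo (by linarith)).prod
      (isOpen_Bset Y P hVo (by linarith))).preimage continuous_subtype_val
  · exact ⟨mem_Bset_self Y P hyV (by linarith), mem_Bset_self Y P hyV (by linarith)⟩

lemma smul_cont_EP :
    @Continuous (ℂ × TotalP Y P) (TotalP Y P)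
      (@instTopologicalSpaceProd _ _ _ (topEP Y P)) (topEP Y P)
      (fun e => ⟨e.2.1, e.1 • e.2.2⟩) := by
  letI := topEP Y P
  apply continuous_toEP
  intro U p ε hU hε
  rw [isOpen_iff_forall_mem_open]
  rintro ⟨c, ⟨y, h⟩⟩ hx
  obtain ⟨a, rfl⟩ := fibMk_surj y h
  have h2 : fibNormQ Y P y (fibMk Y P y (c • a - p)) < ε := hx.2
  rw [fibNormQ_mk] at h2
  set d₀ := fibNormRep Y P y (c • a - p) with hd₀
  set η := ε - d₀ with hη
  have hηp : 0 < η := by linarith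
  set M := fibNormRep Y P y a with hM
  have hM0 : 0 ≤ M := fibNormRep_nonneg y a
  set δ : ℝ := min 1 (η / (3 * (M + 1))) with hδ
  have hδp : 0 < δ := lt_min one_pos (by positivity)
  set δ' : ℝ := η / (3 * (‖c‖ + 1)) with hδ'
  have hδ'p : 0 < δ' := by positivity
  set V := U ∩ ({z : Y | fibNormRep Y P z (c • a - p) < d₀ + η / 3}
    ∩ {z : Y | fibNormRep Y P z a < M + 1}) with hV
  have hVo : IsOpen V := hU.inter
    ((isOpen_lt (continuous_fibNormRep (c • a - p)) continuous_const).inter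
      (isOpen_lt (continuous_fibNormRep a) continuous_const))
  have hyV : y ∈ V := ⟨hx.1, by
    constructor
    · simp only [Set.mem_setOf_eq]; linarith
    · simp only [Set.mem_setOf_eq]; linarith⟩
  refine ⟨Metric.ball c δ ×ˢ Bset Y P V a δ', ?_, Metric.isOpen_ball.prod
    (isOpen_Bset Y P hVo hδ'p), Metric.mem_ball_self hδp, mem_Bset_self Y P hyV hδ'p⟩
  rintro ⟨c', ⟨z, k⟩⟩ ⟨hc', ⟨hzV, hkn⟩⟩
  refine Set.mem_preimage.mpr ⟨hzV.1, ?_⟩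
  show fibNormQ Y P z (c' • k - fibMk Y P z p) < ε
  have hb := fibNormQ_smul_sub_le z k c c' a p
  have hdist : ‖c' - c‖ < δ := by
    rw [← dist_eq_norm]
    exact Metric.mem_ball.mp hc'
  have hc'le : ‖c'‖ ≤ ‖c‖ + 1 := by
    have h1 : ‖c'‖ ≤ ‖c‖ + ‖c' - c‖ := by
      calc ‖c'‖ = ‖c + (c' - c)‖ := by ring_nf
        _ ≤ ‖c‖ + ‖c' - c‖ := norm_add_le _ _
    have h2 : δ ≤ 1 := min_le_left _ _
    linarith
  have hknn : 0 ≤ fibNormQ Y P z (k - fibMk Y P z a) := fibNormQ_nonneg z _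
  have ht1 : ‖c'‖ * fibNormQ Y P z (k - fibMk Y P z a) < η / 3 := by
    have e1 : ‖c'‖ * fibNormQ Y P z (k - fibMk Y P z a) ≤ (‖c‖ + 1) *
        fibNormQ Y P z (k - fibMk Y P z a) := mul_le_mul_of_nonneg_right hc'le hknn
    have e2 : (‖c‖ + 1) * fibNormQ Y P z (k - fibMk Y P z a) < (‖c‖ + 1) * δ' :=
      mul_lt_mul_of_pos_left hkn (by positivity)
    have e3 : (‖c‖ + 1) * δ' = η / 3 := by
      rw [hδ']
      field_simp
    linarith
  have ht2 : ‖c' - c‖ * fibNormRep Y P z a < η / 3 := by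
    have hrz : fibNormRep Y P z a < M + 1 := hzV.2.2
    have hrz0 : 0 ≤ fibNormRep Y P z a := fibNormRep_nonneg z a
    have e1 : ‖c' - c‖ * fibNormRep Y P z a ≤ ‖c' - c‖ * (M + 1) :=
      mul_le_mul_of_nonneg_left (le_of_lt hrz) (norm_nonneg _)
    have e2 : ‖c' - c‖ * (M + 1) < δ * (M + 1) :=
      mul_lt_mul_of_pos_right hdist (by positivity)
    have e3 : δ * (M + 1) ≤ η / 3 := by
      calc δ * (M + 1) ≤ (η / (3 * (M + 1))) * (M + 1) :=
            mul_le_mul_of_nonneg_right (min_le_right _ _) (by positivity)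
        _ = η / 3 := by field_simp
    linarith
  have ht3 : fibNormRep Y P z (c • a - p) < d₀ + η / 3 := hzV.2.1
  linarith

lemma norm_cont_EP : ∀ F ∈ C0SectionsP Y P, Continuous fun y => fibNormQ Y P y (F y) := by
  letI := topEP Y P
  intro F hF
  rw [continuous_iff_continuousAt]
  intro y₀
  rw [ContinuousAt, Metric.tendsto_nhds]
  intro ε hε
  obtain ⟨r, hr⟩ := fibMk_surj y₀ (F y₀)
  set O₁ := (fun z : Y => (⟨z, F z⟩ : TotalP Y P)) ⁻¹' Bset Y P Set.univ r (ε / 2) with hO₁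
  have hO₁o : IsOpen O₁ := (hF.1.isOpen_preimage _ (isOpen_Bset Y P isOpen_univ (by linarith)))
  have hyO₁ : y₀ ∈ O₁ := by
    refine Set.mem_preimage.mpr ⟨trivial, ?_⟩
    show fibNormQ Y P y₀ (F y₀ - fibMk Y P y₀ r) < ε / 2
    rw [← hr, sub_self, fibNormQ_zero]
    linarith
  set O₂ := (fun z : Y => fibNormRep Y P z r) ⁻¹' Metric.ball (fibNormRep Y P y₀ r) (ε / 2)
    with hO₂
  have hO₂o : IsOpen O₂ := (continuous_fibNormRep r).isOpen_preimage _ Metric.isOpen_ball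
  have hyO₂ : y₀ ∈ O₂ := by
    refine Set.mem_preimage.mpr ?_
    exact Metric.mem_ball_self (by linarith)
  filter_upwards [hO₁o.mem_nhds hyO₁, hO₂o.mem_nhds hyO₂] with z hz1 hz2
  have hz1' : fibNormQ Y P z (F z - fibMk Y P z r) < ε / 2 := hz1.2
  have hz2' : |fibNormRep Y P z r - fibNormRep Y P y₀ r| < ε / 2 := by
    have := Metric.mem_ball.mp hz2
    rwa [Real.dist_eq] at this
  have hkey := abs_fibNormQ_sub_rep z (F z) r
  have hy₀ : fibNormQ Y P y₀ (F y₀) = fibNormRep Y P y₀ r := by rw [← hr, fibNormQ_mk]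
  rw [Real.dist_eq, hy₀]
  have habs : |fibNormQ Y P z (F z) - fibNormRep Y P y₀ r|
      ≤ |fibNormQ Y P z (F z) - fibNormRep Y P z r|
        + |fibNormRep Y P z r - fibNormRep Y P y₀ r| := abs_sub_le _ _ _
  linarith

lemma secondCountable_EP [SecondCountableTopology Y] [SecondCountableTopology P] :
    @SecondCountableTopology (TotalP Y P) (topEP Y P) := by
  letI := topEP Y P
  obtain ⟨D, hDc, hDd⟩ := TopologicalSpace.exists_countable_dense P
  obtain ⟨B, hBc, -, hB⟩ := TopologicalSpace.exists_countable_basis Y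
  set C : Set (Set (TotalP Y P)) :=
    {S | ∃ V ∈ B, ∃ d ∈ D, ∃ q : ℚ, 0 < (q : ℝ) ∧ S = Bset Y P V d (q : ℝ)} with hC
  have hcount : C.Countable := by
    have himg : C ⊆ (fun t : (Set Y × P) × ℚ => Bset Y P t.1.1 t.1.2 (t.2 : ℝ)) ''
        ((B ×ˢ D) ×ˢ (Set.univ : Set ℚ)) := by
      rintro S ⟨V, hV, d, hd, q, hq, rfl⟩
      exact ⟨((V, d), q), ⟨⟨hV, hd⟩, trivial⟩, rfl⟩
    exact Set.Countable.mono himg (((hBc.prod hDc).prod Set.countable_univ).image _)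
  have hbasisC : TopologicalSpace.IsTopologicalBasis C := by
    apply TopologicalSpace.isTopologicalBasis_of_isOpen_of_nhds
    · rintro S ⟨V, hV, d, hd, q, hq, rfl⟩
      exact isOpen_Bset Y P (hB.isOpen hV) hq
    · intro x u hxu hu
      obtain ⟨S, hS, hxS, hSu⟩ := (basisP_isBasis Y P).exists_subset_of_mem_open hxu hu
      obtain ⟨U, p, ε, hU, hε, rfl⟩ := hS
      obtain ⟨y, h⟩ := x
      obtain ⟨r, rfl⟩ := fibMk_surj y h
      have hd₀ : fibNormRep Y P y (r - p) < ε := by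
        have := hxS.2
        rwa [fibNormQ_mk_sub] at this
      set d₀ := fibNormRep Y P y (r - p) with hd₀def
      set η := ε - d₀ with hηdef
      have hηp : 0 < η := by linarith
      obtain ⟨d, hdD, hdist⟩ := Metric.mem_closure_iff.mp (hDd r) (η / 4) (by linarith)
      obtain ⟨q, hq1, hq2⟩ := exists_rat_btwn (show η / 4 < η / 2 by linarith)
      have hWo : IsOpen (U ∩ {z : Y | fibNormRep Y P z (r - p) < d₀ + η / 4}) :=
        hU.inter (isOpen_lt (continuous_fibNormRep (r - p)) continuous_const)
      have hyW : y ∈ U ∩ {z : Y | fibNormRep Y P z (r - p) < d₀ + η / 4} :=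
        ⟨hxS.1, by simp only [Set.mem_setOf_eq]; linarith⟩
      obtain ⟨V, hVB, hyV, hVsub⟩ := hB.exists_subset_of_mem_open hyW hWo
      have hqpos : 0 < (q : ℝ) := by linarith
      refine ⟨Bset Y P V d (q : ℝ), ⟨V, hVB, d, hdD, q, hqpos, rfl⟩, ?_, ?_⟩
      · refine ⟨hyV, ?_⟩
        show fibNormQ Y P y (fibMk Y P y r - fibMk Y P y d) < (q : ℝ)
        rw [fibNormQ_mk_sub]
        have h1 : fibNormRep Y P y (r - d) ≤ ‖r - d‖ := fibNormRep_le_norm y (r - d)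
        have h2 : ‖r - d‖ = dist r d := (dist_eq_norm r d).symm
        linarith
      · rintro ⟨z, k⟩ ⟨hzV, hkn⟩
        have hz' := hVsub hzV
        refine hSu ⟨hz'.1, ?_⟩
        have htr := fibNormQ_tri z k d p
        have hsplit : fibNormRep Y P z (d - p)
            ≤ fibNormRep Y P z (d - r) + fibNormRep Y P z (r - p) := by
          have h0 := fibNormRep_add_le z (d - r) (r - p)
          rwa [show d - r + (r - p) = d - p by abel] at h0
        have hdr : fibNormRep Y P z (d - r) ≤ dist r d := by
          have h1 := fibNormRep_le_norm z (d - r)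
          rw [show ‖d - r‖ = dist d r from (dist_eq_norm d r).symm, dist_comm] at h1
          exact h1
        have hrp : fibNormRep Y P z (r - p) < d₀ + η / 4 := hz'.2
        have hknq : fibNormQ Y P z (k - fibMk Y P z d) < (q : ℝ) := hkn
        linarith
  exact hbasisC.secondCountableTopology hcount

end BundleMain

section BundleBasisC0

variable (Y : Type) [TopologicalSpace Y] (P : Type) [NormedAddCommGroup P]
  [NormedSpace ℂ P] [HilbertCzeroModule Y P]

lemma isBasis_C0_EP :
    @TopologicalSpace.IsTopologicalBasis (TotalP Y P) (topEP Y P)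
      {S | ∃ (U : Set Y) (F : (y : Y) → Fib Y P y) (ε : ℝ), IsOpen U ∧
        F ∈ C0SectionsP Y P ∧ 0 < ε ∧
        S = {e : TotalP Y P | e.1 ∈ U ∧ fibNormQ Y P e.1 (e.2 - F e.1) < ε}} := by
  letI := topEP Y P
  apply TopologicalSpace.isTopologicalBasis_of_isOpen_of_nhds
  · rintro S ⟨U, F, ε, hU, hF, hε, rfl⟩
    rw [isOpen_iff_forall_mem_open]
    rintro ⟨y, h⟩ ⟨hyU, hn⟩
    obtain ⟨pp, rfl⟩ := fibMk_surj y h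
    obtain ⟨r, hr⟩ := fibMk_surj y (F y)
    have hd₀eq : fibNormQ Y P y (fibMk Y P y pp - F y) = fibNormRep Y P y (pp - r) := by
      rw [← hr, fibNormQ_mk_sub]
    set d₀ := fibNormRep Y P y (pp - r) with hd₀def
    have hd₀ : d₀ < ε := by
      have : fibNormQ Y P y (fibMk Y P y pp - F y) < ε := hn
      rwa [hd₀eq] at this
    set η := ε - d₀ with hηdef
    have hηp : 0 < η := by linarith
    set O := (fun z : Y => (⟨z, F z⟩ : TotalP Y P)) ⁻¹' Bset Y P Set.univ r (η / 3) with hO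
    have hOo : IsOpen O := hF.1.isOpen_preimage _ (isOpen_Bset Y P isOpen_univ (by linarith))
    have hyO : y ∈ O := by
      refine Set.mem_preimage.mpr ⟨trivial, ?_⟩
      show fibNormQ Y P y (F y - fibMk Y P y r) < η / 3
      rw [← hr, sub_self, fibNormQ_zero]
      linarith
    set W := {z : Y | fibNormRep Y P z (pp - r) < d₀ + η / 3} with hW
    have hWo : IsOpen W := isOpen_lt (continuous_fibNormRep (pp - r)) continuous_const
    have hyW : y ∈ W := by simp only [hW, Set.mem_setOf_eq]; linarith
    refine ⟨Bset Y P ((U ∩ O) ∩ W) pp (η / 3), ?_,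
      isOpen_Bset Y P ((hU.inter hOo).inter hWo) (by linarith),
      mem_Bset_self Y P ⟨⟨hyU, hyO⟩, hyW⟩ (by linarith)⟩
    rintro ⟨z, k⟩ ⟨⟨⟨hzU, hzO⟩, hzW⟩, hkn⟩
    refine ⟨hzU, ?_⟩
    show fibNormQ Y P z (k - F z) < ε
    have h3 := fibNormQ_sub_le₃ z k (F z) pp r
    have hzO' : fibNormQ Y P z (F z - fibMk Y P z r) < η / 3 := hzO.2
    have hzW' : fibNormRep Y P z (pp - r) < d₀ + η / 3 := hzW
    have hkn' : fibNormQ Y P z (k - fibMk Y P z pp) < η / 3 := hkn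
    linarith
  · intro x u hxu hu
    obtain ⟨S, hS, hxS, hSu⟩ := (basisP_isBasis Y P).exists_subset_of_mem_open hxu hu
    obtain ⟨U, p, ε, hU, hε, rfl⟩ := hS
    exact ⟨_, ⟨U, hatSec Y P p, ε, hU, hatSec_mem_C0 Y P p, hε, rfl⟩, hxS, hSu⟩

end BundleBasisC0
/-- **Proposition 2.3 (first part).**  Let `P` be a second countable Hilbert
`C₀(Y)`-module.  The family of sets `U_{p,ε}` is a base for a second countable
topology on `E_P = ⊔_y P_y` which makes `E_P` a Hilbert bundle over `Y`. -/
theorem associated_bundle_is_hilbert_bundle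
    (Y : Type) [TopologicalSpace Y] [T2Space Y] [LocallyCompactSpace Y]
    [SecondCountableTopology Y]
    (P : Type) [NormedAddCommGroup P] [NormedSpace ℂ P] [CompleteSpace P]
    [SecondCountableTopology P] [HilbertCzeroModule Y P] :
    -- the sets U_{p,ε} form a base of the topology they generate
    @TopologicalSpace.IsTopologicalBasis (TotalP Y P) (topEP Y P) (basisP Y P) ∧
    -- the topology is second countable
    @SecondCountableTopology (TotalP Y P) (topEP Y P) ∧
    -- (i) fiberwise addition and scalar multiplication are continuous
    @Continuous {e : TotalP Y P × TotalP Y P // e.1.1 = e.2.1} (TotalP Y P)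
      (@instTopologicalSpaceSubtype _ _
        (@instTopologicalSpaceProd _ _ (topEP Y P) (topEP Y P))) (topEP Y P)
      (fun e => ⟨e.1.1.1, e.1.1.2 + fcast Y P e.2.symm e.1.2.2⟩) ∧
    @Continuous (ℂ × TotalP Y P) (TotalP Y P)
      (@instTopologicalSpaceProd _ _ _ (topEP Y P)) (topEP Y P)
      (fun e => ⟨e.2.1, e.1 • e.2.2⟩) ∧
    -- (ii) the norm is continuous along continuous sections vanishing at infinity
    (∀ F ∈ C0SectionsP Y P, Continuous fun y => fibNormQ Y P y (F y)) ∧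
    -- (iii) the continuous sections vanishing at infinity fill out each fiber
    (∀ (y : Y) (v : Fib Y P y), ∃ F ∈ C0SectionsP Y P, F y = v) ∧
    -- (iv) the sets U_{F,ε}, for F ∈ C₀(Y,E_P), also form a base of the topology
    @TopologicalSpace.IsTopologicalBasis (TotalP Y P) (topEP Y P)
      {S | ∃ (U : Set Y) (F : (y : Y) → Fib Y P y) (ε : ℝ), IsOpen U ∧
        F ∈ C0SectionsP Y P ∧ 0 < ε ∧
        S = {e : TotalP Y P | e.1 ∈ U ∧ fibNormQ Y P e.1 (e.2 - F e.1) < ε}} := by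
  exact ⟨basisP_isBasis Y P, secondCountable_EP Y P, add_cont_EP Y P, smul_cont_EP Y P,
    norm_cont_EP Y P, fiber_full_EP Y P, isBasis_C0_EP Y P⟩

end Stabilization
end
end

section
/- Let G be a second countable locally compact Hausdorff proper groupoid with unit space Y, let E be a Hilbert bundle over Y, and suppose given a map (g,ξ) ↦ gξ from G∗E = {(g,ξ) : s(g) = π(ξ)} to E that is algebraically a left groupoid action such that for each g the map ξ ↦ gξ is a unitary from H_{s(g)} onto H_{r(g)}. Then the action map G∗E → E (with G∗E given the relative topology from G×E) is continuous if and only if for each F ∈ C_0(Y,E) the map g ↦ g·F(s(g)) is continuous from G to E. -/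
noncomputable section
open scoped ZeroAtInfty
open Topology Filter ComplexConjugate

namespace Stabilization

variable (Y : Type) [TopologicalSpace Y]
variable (P : Type) [NormedAddCommGroup P] [NormedSpace ℂ P] [HilbertCzeroModule Y P]

variable (Y : Type) [TopologicalSpace Y]

variable (Gp : LCGroupoid Y)

/-- Transport between fibers of a Hilbert bundle over equal base points. -/
def bcast {Y : Type} [TopologicalSpace Y] (E : HilbertBundle Y) {y z : Y} (h : y = z) :
    E.H y → E.H z := fun v => h ▸ v

/-- An algebraic left action (by unitaries) of a groupoid `Gp` on a Hilbert bundle `E`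
over its unit space: for each `g`, a unitary `E_{s(g)} → E_{r(g)}`, compatible with
units, multiplication and inversion (continuity is *not* assumed here). -/
structure BundleGActionAlg {Y : Type} [TopologicalSpace Y] (Gp : LCGroupoid Y)
    (E : HilbertBundle Y) where
  act : (g : Gp.G) → E.H (Gp.s g) → E.H (Gp.r g)
  act_add : ∀ (g : Gp.G) (v w : E.H (Gp.s g)), act g (v + w) = act g v + act g w
  act_csmul : ∀ (g : Gp.G) (c : ℂ) (v : E.H (Gp.s g)), act g (c • v) = c • act g v
  act_norm : ∀ (g : Gp.G) (v : E.H (Gp.s g)), ‖act g v‖ = ‖v‖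
  act_surjective : ∀ g : Gp.G, Function.Surjective (act g)
  act_unit : ∀ (y : Y) (v : E.H y),
    act (Gp.unit y) (bcast E (Gp.s_unit y).symm v) = bcast E (Gp.r_unit y).symm v
  act_mul : ∀ (g h : Gp.G) (hc : Gp.s g = Gp.r h) (v : E.H (Gp.s h)),
    act (Gp.mul g h) (bcast E (Gp.s_mul g h hc).symm v) =
      bcast E (Gp.r_mul g h hc).symm (act g (bcast E hc.symm (act h v)))

/-- The norm is continuous on the total space of a Hilbert bundle. -/
private lemma normE_continuous {Y : Type} [TopologicalSpace Y] (E : HilbertBundle Y) :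
    @Continuous ((y : Y) × E.H y) ℝ E.topE _ (fun e => ‖e.2‖) := by
  letI := E.topE
  rw [continuous_iff_continuousAt]
  rintro ⟨y₀, h₀⟩
  rw [ContinuousAt, Metric.tendsto_nhds]
  intro ε hε
  obtain ⟨F, hF, hFy⟩ := E.fiber_full y₀ h₀
  have hnc : Continuous fun y => ‖F y‖ := E.norm_cont F hF
  have hVopen : IsOpen {y : Y | |‖F y‖ - ‖F y₀‖| < ε / 2} :=
    isOpen_lt ((hnc.sub continuous_const).abs) continuous_const
  have hSopen : IsOpen {e : (y : Y) × E.H y |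
      e.1 ∈ {y : Y | |‖F y‖ - ‖F y₀‖| < ε / 2} ∧ ‖e.2 - F e.1‖ < ε / 2} :=
    E.isBasis.isOpen ⟨_, F, ε / 2, hVopen, hF, by linarith, rfl⟩
  have hmem : (⟨y₀, h₀⟩ : (y : Y) × E.H y) ∈ {e : (y : Y) × E.H y |
      e.1 ∈ {y : Y | |‖F y‖ - ‖F y₀‖| < ε / 2} ∧ ‖e.2 - F e.1‖ < ε / 2} := by
    constructor
    · simp only [Set.mem_setOf_eq, sub_self, abs_zero]; linarith
    · simp only [hFy, sub_self, norm_zero]; linarith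
  filter_upwards [hSopen.mem_nhds hmem] with e he
  obtain ⟨he1, he2⟩ := he
  have habs : |‖e.2‖ - ‖F e.1‖| ≤ ‖e.2 - F e.1‖ := abs_norm_sub_norm_le _ _
  have htri : |‖e.2‖ - ‖h₀‖| ≤ |‖e.2‖ - ‖F e.1‖| + |‖F e.1‖ - ‖h₀‖| := abs_sub_le _ _ _
  have hFy' : ‖F y₀‖ = ‖h₀‖ := by rw [hFy]
  rw [Real.dist_eq]
  rw [hFy'] at he1
  linarith

/-- Fiberwise subtraction followed by the norm is continuous along a pair of
continuous fields over the same base map. -/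
private lemma normE_sub_continuous {Y : Type} [TopologicalSpace Y] (E : HilbertBundle Y)
    {X : Type} [TopologicalSpace X] (b : X → Y) (f k : (x : X) → E.H (b x))
    (hf : @Continuous X ((y : Y) × E.H y) _ E.topE (fun x => ⟨b x, f x⟩))
    (hk : @Continuous X ((y : Y) × E.H y) _ E.topE (fun x => ⟨b x, k x⟩)) :
    Continuous fun x => ‖f x - k x‖ := by
  letI := E.topE
  have hneg : @Continuous X ((y : Y) × E.H y) _ E.topE
      (fun x => ⟨b x, (-1 : ℂ) • k x⟩) :=
    E.smul_cont.comp (continuous_const.prodMk hk)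
  have hpair : Continuous fun x =>
      (⟨(⟨b x, f x⟩, ⟨b x, (-1 : ℂ) • k x⟩), rfl⟩ :
        {p : ((y : Y) × E.H y) × ((y : Y) × E.H y) // p.1.1 = p.2.1}) := by
    refine Continuous.subtype_mk ?_ (fun x => (rfl : b x = b x))
    exact hf.prodMk hneg
  have hnorm : Continuous fun x => ‖f x + (-1 : ℂ) • k x‖ :=
    (normE_continuous E).comp (E.add_cont.comp hpair)
  simpa [neg_one_smul, ← sub_eq_add_neg] using hnorm

/-- The action of a groupoid element commutes with subtraction. -/
private lemma act_sub {Y : Type} [TopologicalSpace Y] {Gp : LCGroupoid Y}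
    {E : HilbertBundle Y} (A : BundleGActionAlg Gp E) (g : Gp.G)
    (a b : E.H (Gp.s g)) : A.act g (a - b) = A.act g a - A.act g b := by
  have h : a - b = a + (-1 : ℂ) • b := by rw [neg_one_smul, ← sub_eq_add_neg]
  rw [h, A.act_add, A.act_csmul, neg_one_smul, ← sub_eq_add_neg]

/-- **Proposition 2.4.**  Let `G` be a (second countable locally compact Hausdorff
proper) groupoid with unit space `Y`, `E` a Hilbert bundle over `Y`, and suppose given
an algebraic left unitary groupoid action of `G` on `E`.  Then the action map
`G∗E → E` is continuous (for the relative topology of `G×E` on `G∗E`) if and only if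
for each `F ∈ C₀(Y,E)` the map `g ↦ g·F(s(g))` is continuous from `G` to `E`. -/
theorem bundle_action_continuous_iff
    (Y : Type) [TopologicalSpace Y] [T2Space Y] [LocallyCompactSpace Y]
    [SecondCountableTopology Y]
    (Gp : LCGroupoid Y) (E : HilbertBundle Y) (A : BundleGActionAlg Gp E) :
    @Continuous {q : Gp.G × ((y : Y) × E.H y) // Gp.s q.1 = q.2.1} ((y : Y) × E.H y)
      (@instTopologicalSpaceSubtype _ _ (@instTopologicalSpaceProd _ _ _ E.topE)) E.topE
      (fun q => ⟨Gp.r q.1.1, A.act q.1.1 (bcast E q.2.symm q.1.2.2)⟩) ↔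
    ∀ F ∈ C0Sections E.H E.topE,
      @Continuous Gp.G ((y : Y) × E.H y) _ E.topE
        (fun g => ⟨Gp.r g, A.act g (F (Gp.s g))⟩) := by
  letI := E.topE
  constructor
  · intro hcont F hF
    have hsec : Continuous fun g : Gp.G =>
        (⟨(g, ⟨Gp.s g, F (Gp.s g)⟩), rfl⟩ :
          {q : Gp.G × ((y : Y) × E.H y) // Gp.s q.1 = q.2.1}) := by
      refine Continuous.subtype_mk ?_ (fun g => (rfl : Gp.s g = Gp.s g))
      exact continuous_id.prodMk (hF.1.comp Gp.s_cont)
    exact hcont.comp hsec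
  · intro hact
    rw [continuous_iff_continuousAt]
    intro q₀
    rcases q₀ with ⟨⟨g₀, e₀⟩, hq₀⟩
    obtain ⟨y₀, ξ₀⟩ := e₀
    change Gp.s g₀ = y₀ at hq₀
    subst hq₀
    show ContinuousAt _ (⟨(g₀, ⟨Gp.s g₀, ξ₀⟩), rfl⟩ :
      {q : Gp.G × ((y : Y) × E.H y) // Gp.s q.1 = q.2.1})
    rw [ContinuousAt, (E.isBasis.nhds_hasBasis).tendsto_right_iff]
    rintro S ⟨⟨U, F', ε, hU, hF', hε, rfl⟩, hr₀, hd₀⟩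
    obtain ⟨F, hF, hFy⟩ := E.fiber_full (Gp.s g₀) ξ₀
    have hd₀' : ‖A.act g₀ ξ₀ - F' (Gp.r g₀)‖ < ε := hd₀
    set ψ : Gp.G → ℝ := fun g => ‖A.act g (F (Gp.s g)) - F' (Gp.r g)‖ with hψdef
    have hψ : Continuous ψ :=
      normE_sub_continuous E Gp.r (fun g => A.act g (F (Gp.s g)))
        (fun g => F' (Gp.r g)) (hact F hF) (hF'.1.comp Gp.r_cont)
    have hψ₀ : ψ g₀ < ε := by
      simp only [hψdef, hFy]
      exact hd₀'
    set ε' : ℝ := (ε - ψ g₀) / 2 with hε'def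
    have hε' : 0 < ε' := by
      simp only [hε'def]; linarith
    have hc1 : Continuous fun q : {q : Gp.G × ((y : Y) × E.H y) // Gp.s q.1 = q.2.1} =>
        q.1.1 := continuous_fst.comp continuous_subtype_val
    have hc2 : Continuous fun q : {q : Gp.G × ((y : Y) × E.H y) // Gp.s q.1 = q.2.1} =>
        q.1.2 := continuous_snd.comp continuous_subtype_val
    have hO₁ : IsOpen {q : {q : Gp.G × ((y : Y) × E.H y) // Gp.s q.1 = q.2.1} |
        Gp.r q.1.1 ∈ U} := hU.preimage (Gp.r_cont.comp hc1)
    have hO₂ : IsOpen {q : {q : Gp.G × ((y : Y) × E.H y) // Gp.s q.1 = q.2.1} |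
        ψ q.1.1 < ψ g₀ + ε'} := isOpen_lt (hψ.comp hc1) continuous_const
    have hW : IsOpen {e : (y : Y) × E.H y |
        e.1 ∈ (Set.univ : Set Y) ∧ ‖e.2 - F e.1‖ < ε'} :=
      E.isBasis.isOpen ⟨Set.univ, F, ε', isOpen_univ, hF, hε', rfl⟩
    have hO₃ : IsOpen {q : {q : Gp.G × ((y : Y) × E.H y) // Gp.s q.1 = q.2.1} |
        q.1.2.1 ∈ (Set.univ : Set Y) ∧ ‖q.1.2.2 - F q.1.2.1‖ < ε'} :=
      hW.preimage hc2
    have hm₁ : (⟨(g₀, ⟨Gp.s g₀, ξ₀⟩), rfl⟩ :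
        {q : Gp.G × ((y : Y) × E.H y) // Gp.s q.1 = q.2.1}) ∈
        {q : {q : Gp.G × ((y : Y) × E.H y) // Gp.s q.1 = q.2.1} |
          Gp.r q.1.1 ∈ U} := hr₀
    have hm₂ : (⟨(g₀, ⟨Gp.s g₀, ξ₀⟩), rfl⟩ :
        {q : Gp.G × ((y : Y) × E.H y) // Gp.s q.1 = q.2.1}) ∈
        {q : {q : Gp.G × ((y : Y) × E.H y) // Gp.s q.1 = q.2.1} |
          ψ q.1.1 < ψ g₀ + ε'} := by
      simp only [Set.mem_setOf_eq]; linarith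
    have hm₃ : (⟨(g₀, ⟨Gp.s g₀, ξ₀⟩), rfl⟩ :
        {q : Gp.G × ((y : Y) × E.H y) // Gp.s q.1 = q.2.1}) ∈
        {q : {q : Gp.G × ((y : Y) × E.H y) // Gp.s q.1 = q.2.1} |
          q.1.2.1 ∈ (Set.univ : Set Y) ∧ ‖q.1.2.2 - F q.1.2.1‖ < ε'} := by
      refine ⟨Set.mem_univ _, ?_⟩
      simp only [hFy, sub_self, norm_zero]
      exact hε'
    filter_upwards [hO₁.mem_nhds hm₁, hO₂.mem_nhds hm₂, hO₃.mem_nhds hm₃] with q h1 h2 h3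
    rcases q with ⟨⟨g, e⟩, hq⟩
    obtain ⟨y, η⟩ := e
    change Gp.s g = y at hq
    subst hq
    refine ⟨h1, ?_⟩
    have h3' : ‖η - F (Gp.s g)‖ < ε' := h3.2
    have h2' : ‖A.act g (F (Gp.s g)) - F' (Gp.r g)‖ < ψ g₀ + ε' := h2
    show ‖A.act g η - F' (Gp.r g)‖ < ε
    have e1 : ‖A.act g η - A.act g (F (Gp.s g))‖ = ‖η - F (Gp.s g)‖ := by
      rw [← act_sub A g]; exact A.act_norm g _
    have tri : ‖A.act g η - F' (Gp.r g)‖ ≤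
        ‖A.act g η - A.act g (F (Gp.s g))‖ + ‖A.act g (F (Gp.s g)) - F' (Gp.r g)‖ := by
      simpa [sub_add_sub_cancel] using norm_add_le (A.act g η - A.act g (F (Gp.s g)))
        (A.act g (F (Gp.s g)) - F' (Gp.r g))
    rw [e1] at tri
    have hε'' : ε' = (ε - ψ g₀) / 2 := hε'def
    linarith

end Stabilization
end
end
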